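/- Let $(A,B)$ be a jointly Gaussian centred real random vector with $\sigma_A^2 = \mathbb{E}[A^2] > 0$, $\sigma_B^2 = \mathbb{E}[B^2]$, and covariance $\sigma_{AB}$. Then for all $0 \leq \eta < \tfrac{1}{2}\sigma_A^{-2}$, $\mathbb{E}[e^{\eta A^2}\cos B] \leq \mathbb{E}[e^{\eta A^2}]\,\mathbb{E}[\cos B]$, provided $\mathbb{E}[\cos B] \geq 0$ (note $\mathbb{E}[\cos B] = e^{-\sigma_B^2/2} > 0$ always holds). -/

import Mathlib

open MeasureTheory ProbabilityTheory Real Complex Filter Metric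
open scoped NNReal

set_option maxHeartbeats 1000000

noncomputable section

lemma aux_integrable_dirac {E : Type*} [NormedAddCommGroup E] {α : Type*} [MeasurableSpace α]
    (a : α) {f : α → E} (hf : StronglyMeasurable f) : Integrable f (Measure.dirac a) := by
  refine ⟨hf.aestronglyMeasurable, ?_⟩
  rw [HasFiniteIntegral, lintegral_dirac' _ hf.enorm]
  exact ENNReal.coe_lt_top

lemma sm_cexp (z : ℂ) : StronglyMeasurable (fun x : ℝ => Complex.exp (z * x)) :=
  (Complex.continuous_exp.comp (continuous_const.mul Complex.continuous_ofReal)).stronglyMeasurable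

/-- Master lemma: complex exponential integral against a centred Gaussian. -/
lemma gauss_cexp (v : ℝ≥0) (z : ℂ) :
    Integrable (fun x : ℝ => Complex.exp (z * x)) (gaussianReal 0 v) ∧
    ∫ x : ℝ, Complex.exp (z * x) ∂(gaussianReal 0 v) = Complex.exp (z ^ 2 * v / 2) := by
  by_cases hv : v = 0
  · subst hv
    rw [gaussianReal_zero_var]
    constructor
    · exact aux_integrable_dirac 0 (sm_cexp z)
    · rw [integral_dirac' _ _ (sm_cexp z)]
      simp
  · have hvpos : (0:ℝ) < v := lt_of_le_of_ne v.coe_nonneg (by exact_mod_cast (Ne.symm hv))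
    have hcast : (1 / (2 * (v:ℂ))) = ((1 / (2 * (v:ℝ)) : ℝ) : ℂ) := by push_cast; ring
    have hb : (-(1 / (2 * (v:ℂ)))).re < 0 := by
      rw [hcast]
      simp only [neg_re, Complex.ofReal_re]
      refine neg_lt_zero.mpr (by positivity)
    have hmeas : AEMeasurable (fun x : ℝ => (gaussianPDFReal 0 v x).toNNReal) volume :=
      (measurable_gaussianPDFReal 0 v).real_toNNReal.aemeasurable
    have hpdf_eq : ∀ x : ℝ, (((gaussianPDFReal 0 v x).toNNReal : ℝ≥0) : ℝ) • Complex.exp (z * x)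
        = ((√(2 * π * v))⁻¹ : ℂ) * Complex.exp (-(1 / (2 * (v:ℂ))) * x ^ 2 + z * x + 0) := by
      intro x
      rw [Real.coe_toNNReal _ (gaussianPDFReal_nonneg 0 v x)]
      rw [gaussianPDFReal, real_smul]
      push_cast
      rw [mul_assoc, ← Complex.exp_add]
      congr 2
      have : (v : ℂ) ≠ 0 := by exact_mod_cast hv
      field_simp
      try ring
    rw [gaussianReal_of_var_ne_zero 0 hv, gaussianPDF_def]
    simp only [ENNReal.ofReal]
    constructor
    · rw [integrable_withDensity_iff_integrable_smul₀ hmeas]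
      refine Integrable.congr
        ((integrable_cexp_quadratic' hb z 0).const_mul (((√(2 * π * v) : ℝ) : ℂ))⁻¹)
        (ae_of_all _ fun x => ?_)
      simp only []
      rw [← hpdf_eq x, NNReal.smul_def]
    · rw [integral_withDensity_eq_integral_smul₀ hmeas]
      simp_rw [NNReal.smul_def, hpdf_eq]
      rw [integral_const_mul, integral_cexp_quadratic hb z 0]
      have h1 : (↑π / -(-(1 / (2 * (v:ℂ))))) = ((2 * π * v : ℝ) : ℂ) := by
        have : (v : ℂ) ≠ 0 := by exact_mod_cast hv
        push_cast
        field_simp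
      rw [h1]
      have h2 : (((2 * π * v : ℝ) : ℂ)) ^ (1/2 : ℂ) = ((√(2 * π * v) : ℝ) : ℂ) := by
        rw [Real.sqrt_eq_rpow, Complex.ofReal_cpow (by positivity)]
        norm_num
      rw [h2]
      have h3 : (0 : ℂ) - z ^ 2 / (4 * -(1 / (2 * (v:ℂ)))) = z ^ 2 * v / 2 := by
        have : (v : ℂ) ≠ 0 := by exact_mod_cast hv
        field_simp
        ring
      rw [h3, ← mul_assoc]
      have h4 : (((√(2 * π * v) : ℝ) : ℂ))⁻¹ * ((√(2 * π * v) : ℝ) : ℂ) = 1 :=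
        inv_mul_cancel₀ (by exact_mod_cast Real.sqrt_ne_zero'.mpr (by positivity))
      rw [h4, one_mul]

lemma gauss_exp_int (v : ℝ≥0) (t : ℝ) :
    Integrable (fun x : ℝ => rexp (t * x)) (gaussianReal 0 v) := by
  have h := (gauss_cexp v t).1.norm
  refine h.congr (ae_of_all _ fun x => ?_)
  simp only [Complex.norm_exp]
  norm_num

lemma gauss_exp (v : ℝ≥0) (t : ℝ) :
    ∫ x : ℝ, rexp (t * x) ∂(gaussianReal 0 v) = rexp (t ^ 2 * v / 2) := by
  have h := (gauss_cexp v t).2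
  calc ∫ x : ℝ, rexp (t * x) ∂(gaussianReal 0 v)
      = ∫ x : ℝ, Complex.reCLM (Complex.exp (t * x)) ∂(gaussianReal 0 v) := by
        refine integral_congr_ae (ae_of_all _ fun x => ?_)
        simp only [Complex.reCLM_apply, Complex.exp_re]
        push_cast
        simp [Complex.mul_re]
    _ = Complex.reCLM (∫ x : ℝ, Complex.exp (t * x) ∂(gaussianReal 0 v)) :=
        ContinuousLinearMap.integral_comp_comm _ (gauss_cexp v t).1
    _ = rexp (t ^ 2 * v / 2) := by
        rw [h]
        simp [Complex.exp_re, ← Complex.ofReal_pow]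

lemma gauss_cos_int (v : ℝ≥0) :
    Integrable (fun x : ℝ => Real.cos x) (gaussianReal 0 v) := by
  have h := (gauss_cexp v Complex.I).1.norm
  refine Integrable.mono' h ((Real.continuous_cos).stronglyMeasurable.aestronglyMeasurable)
    (ae_of_all _ fun x => ?_)
  rw [Complex.norm_exp]
  simp only [Real.norm_eq_abs]
  calc |Real.cos x| ≤ 1 := Real.abs_cos_le_one x
    _ ≤ rexp ((Complex.I * x).re) := by simp [Complex.mul_re]

lemma gauss_cos (v : ℝ≥0) :
    ∫ x : ℝ, Real.cos x ∂(gaussianReal 0 v) = rexp (-(v:ℝ) / 2) := by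
  have h := (gauss_cexp v Complex.I).2
  calc ∫ x : ℝ, Real.cos x ∂(gaussianReal 0 v)
      = ∫ x : ℝ, Complex.reCLM (Complex.exp (Complex.I * x)) ∂(gaussianReal 0 v) := by
        refine integral_congr_ae (ae_of_all _ fun x => ?_)
        simp [Complex.exp_re, Complex.mul_re, Complex.mul_im]
    _ = Complex.reCLM (∫ x : ℝ, Complex.exp (Complex.I * x) ∂(gaussianReal 0 v)) :=
        ContinuousLinearMap.integral_comp_comm _ (gauss_cexp v Complex.I).1
    _ = rexp (-(v:ℝ) / 2) := by
        rw [h]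
        have h2 : (Complex.I ^ 2 * v / 2) = ((-(v:ℝ)/2 : ℝ) : ℂ) := by
          rw [Complex.I_sq]; push_cast; ring
        rw [h2]
        simp [Complex.exp_re]

/-- Mixed exponential-oscillatory identity for jointly Gaussian `(A,B)`. -/
lemma mixed_identity {Ω : Type*} [MeasurableSpace Ω] (P : Measure Ω) [IsProbabilityMeasure P]
    {A B : Ω → ℝ} (hA : Measurable A) (hB : Measurable B) {vA vB cAB : ℝ}
    (hq : ∀ u : ℝ, 0 ≤ u ^ 2 * vA + 2 * u * cAB + vB)
    (hmapA : Measure.map A P = gaussianReal 0 vA.toNNReal)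
    (hmapuB : ∀ u : ℝ, Measure.map (fun ω => u * A ω + B ω) P
      = gaussianReal 0 (u ^ 2 * vA + 2 * u * cAB + vB).toNNReal)
    (s : ℝ) :
    ∫ ω, Complex.exp (s * A ω + Complex.I * B ω) ∂P
      = Complex.exp (s ^ 2 * vA / 2 + s * cAB * Complex.I - vB / 2) := by
  -- integrability of exp(t A) under P
  have hintA : ∀ t : ℝ, Integrable (fun ω => rexp (t * A ω)) P := by
    intro t
    have h0 : Integrable (fun x => rexp (t * x)) (Measure.map A P) := by
      rw [hmapA]; exact gauss_exp_int _ t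
    exact (integrable_map_measure h0.aestronglyMeasurable hA.aemeasurable).mp h0
  -- measurability of the complex integrand
  have hFmeas : ∀ z : ℂ, AEStronglyMeasurable
      (fun ω => Complex.exp (z * A ω + Complex.I * B ω)) P := by
    intro z
    refine (Measurable.cexp ?_).stronglyMeasurable.aestronglyMeasurable
    exact ((Complex.measurable_ofReal.comp hA).const_mul z).add
      ((Complex.measurable_ofReal.comp hB).const_mul Complex.I)
  -- integrability of the complex integrand
  have hgint : ∀ z : ℂ, Integrable (fun ω => Complex.exp (z * A ω + Complex.I * B ω)) P := by
    intro z
    refine Integrable.mono' (hintA z.re) (hFmeas z) (ae_of_all _ fun ω => ?_)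
    rw [Complex.norm_exp]
    simp [Complex.add_re, Complex.mul_re]
  -- the two entire functions
  set g : ℂ → ℂ := fun z => ∫ ω, Complex.exp (z * A ω + Complex.I * B ω) ∂P with hg
  set G : ℂ → ℂ := fun z =>
    Complex.exp (z ^ 2 * vA / 2 + z * cAB * Complex.I - vB / 2) with hG
  -- bound integrability : |A| exp(R |A|)
  have habs : ∀ R : ℝ, Integrable (fun ω => |A ω| * rexp (R * |A ω|)) P := by
    intro R
    have hdom : Integrable (fun ω => rexp ((R + 1) * A ω) + rexp (-(R + 1) * A ω)) P :=
      (hintA (R + 1)).add (hintA (-(R + 1)))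
    refine Integrable.mono' hdom ?_ (ae_of_all _ fun ω => ?_)
    · exact ((hA.abs.mul ((hA.abs.const_mul R).exp)).stronglyMeasurable.aestronglyMeasurable).congr
        (ae_of_all _ fun ω => by rfl)
    · have h1 : |A ω| ≤ rexp |A ω| := (Real.add_one_le_exp |A ω|).trans'
        (by linarith [abs_nonneg (A ω)])
      have h2 : ‖|A ω| * rexp (R * |A ω|)‖ = |A ω| * rexp (R * |A ω|) :=
        Real.norm_of_nonneg (by positivity)
      rw [h2]
      calc |A ω| * rexp (R * |A ω|) ≤ rexp |A ω| * rexp (R * |A ω|) := by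
            exact mul_le_mul_of_nonneg_right h1 (Real.exp_nonneg _)
        _ = rexp ((R + 1) * |A ω|) := by rw [← Real.exp_add]; ring_nf
        _ ≤ rexp ((R + 1) * A ω) + rexp (-(R + 1) * A ω) := by
            rcases abs_cases (A ω) with ⟨h, _⟩ | ⟨h, _⟩
            · rw [h]
              nlinarith [Real.exp_nonneg (-(R + 1) * A ω)]
            · rw [h]
              have : (R + 1) * -A ω = -(R + 1) * A ω := by ring
              rw [this]
              nlinarith [Real.exp_nonneg ((R + 1) * A ω)]
  -- g is differentiable
  have hgdiff : Differentiable ℂ g := by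
    intro z₀
    have key := hasDerivAt_integral_of_dominated_loc_of_deriv_le (s := Metric.ball z₀ 1) (Metric.ball_mem_nhds z₀ one_pos)
      (F := fun (z : ℂ) (ω : Ω) => Complex.exp (z * A ω + Complex.I * B ω))
      (F' := fun (z : ℂ) (ω : Ω) => (A ω : ℂ) * Complex.exp (z * A ω + Complex.I * B ω))
      (bound := fun ω => |A ω| * rexp ((‖z₀‖ + 1) * |A ω|))
      (x₀ := z₀)
      (Filter.Eventually.of_forall fun z => hFmeas z)
      (hgint z₀)
      (((Complex.measurable_ofReal.comp hA).mul (Measurable.cexp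
        (((Complex.measurable_ofReal.comp hA).const_mul z₀).add
          ((Complex.measurable_ofReal.comp hB).const_mul Complex.I)))).stronglyMeasurable.aestronglyMeasurable)
      (ae_of_all _ fun ω z hz => ?_)
      (habs (‖z₀‖ + 1))
      (ae_of_all _ fun ω z _ => ?_)
    · exact (key.2).differentiableAt
    · -- norm bound
      rw [norm_mul, Complex.norm_real, Real.norm_eq_abs,
        Complex.norm_exp]
      have hre : (z * A ω + Complex.I * B ω).re = z.re * A ω := by
        simp [Complex.add_re, Complex.mul_re]
      rw [hre]
      refine mul_le_mul_of_nonneg_left (Real.exp_le_exp.mpr ?_) (abs_nonneg _)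
      calc z.re * A ω ≤ |z.re * A ω| := le_abs_self _
        _ = |z.re| * |A ω| := abs_mul _ _
        _ ≤ (‖z₀‖ + 1) * |A ω| := by
            refine mul_le_mul_of_nonneg_right ?_ (abs_nonneg _)
            calc |z.re| ≤ ‖z‖ := Complex.abs_re_le_norm z
              _ ≤ ‖z₀‖ + 1 := by
                  have := mem_ball_iff_norm.mp hz
                  calc ‖z‖ = ‖z‖ := rfl
                    _ = ‖z₀ + (z - z₀)‖ := by ring_nf
                    _ ≤ ‖z₀‖ + ‖z - z₀‖ := norm_add_le _ _
                    _ ≤ ‖z₀‖ + 1 := by linarith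
    · -- derivative
      have h1 : HasDerivAt (fun z : ℂ => z * A ω + Complex.I * B ω) (A ω : ℂ) z :=
        (hasDerivAt_mul_const ((A ω : ℂ))).add_const _
      have h2 := h1.cexp
      exact h2.congr_deriv (mul_comm _ _)
  -- G is differentiable
  have hGdiff : Differentiable ℂ G := by
    apply Differentiable.cexp
    apply Differentiable.sub_const
    exact (((differentiable_pow 2).mul_const _).div_const _).add
      ((differentiable_id.mul_const _).mul_const _)
  -- agreement on the imaginary axis
  have haxis : ∀ u : ℝ, g (Complex.I * u) = G (Complex.I * u) := by
    intro u
    have hmeasuAB : Measurable fun ω => u * A ω + B ω := (hA.const_mul u).add hB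
    have hql : ((u ^ 2 * vA + 2 * u * cAB + vB).toNNReal : ℝ)
        = u ^ 2 * vA + 2 * u * cAB + vB := Real.coe_toNNReal _ (hq u)
    have step1 : g (Complex.I * u)
        = ∫ x : ℝ, Complex.exp (Complex.I * x)
            ∂(gaussianReal 0 (u ^ 2 * vA + 2 * u * cAB + vB).toNNReal) := by
      have hsm : AEStronglyMeasurable (fun x : ℝ => Complex.exp (Complex.I * x))
          (Measure.map (fun ω => u * A ω + B ω) P) :=
        Continuous.aestronglyMeasurable (by continuity)
      rw [← hmapuB u, integral_map hmeasuAB.aemeasurable hsm]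
      refine integral_congr_ae (ae_of_all _ fun ω => ?_)
      push_cast
      ring_nf
    rw [step1, (gauss_cexp _ Complex.I).2]
    simp only [hG]
    congr 1
    rw [Complex.I_sq, hql]
    have hIu : (Complex.I * u) ^ 2 = -(u:ℂ) ^ 2 := by
      rw [mul_pow, Complex.I_sq]; ring
    rw [hIu]
    push_cast
    ring_nf
    rw [Complex.I_sq]
    ring
  -- identity theorem
  have heq : g = G := by
    have hganal : AnalyticOnNhd ℂ g Set.univ :=
      hgdiff.differentiableOn.analyticOnNhd isOpen_univ
    have hGanal : AnalyticOnNhd ℂ G Set.univ :=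
      hGdiff.differentiableOn.analyticOnNhd isOpen_univ
    refine hganal.eq_of_frequently_eq hGanal (z₀ := 0) ?_
    have htend : Tendsto (fun n : ℕ => Complex.I * ((1 / ((n : ℝ) + 1) : ℝ) : ℂ)) atTop
        (nhdsWithin 0 {(0 : ℂ)}ᶜ) := by
      refine tendsto_nhdsWithin_of_tendsto_nhds_of_eventually_within _ ?_ ?_
      · have : Tendsto (fun n : ℕ => (1 / ((n : ℝ) + 1) : ℝ)) atTop (nhds 0) :=
          tendsto_one_div_add_atTop_nhds_zero_nat
        have := (Complex.continuous_ofReal.tendsto 0).comp this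
        have h2 := (tendsto_const_nhds (x := Complex.I)).mul this
        simpa using h2
      · refine Filter.Eventually.of_forall fun n => ?_
        simp only [Set.mem_compl_iff, Set.mem_singleton_iff]
        intro hcon
        rw [mul_eq_zero] at hcon
        rcases hcon with h | h
        · exact Complex.I_ne_zero h
        · rw [Complex.ofReal_eq_zero] at h
          have : (0:ℝ) < 1 / ((n : ℝ) + 1) := by positivity
          linarith [h ▸ this]
    exact htend.frequently (Filter.Frequently.of_forall fun n => haxis _)
  -- conclude at z = s
  have := congrFun heq (s : ℂ)
  simpa [hg, hG] using this

/-- Integrability of `exp (η x²)` against a Gaussian with small enough `η`. -/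
lemma gauss_expsq_int (v : ℝ≥0) (η' : ℝ) (hcond : 2 * (v : ℝ) * η' < 1) :
    Integrable (fun x : ℝ => rexp (η' * x ^ 2)) (gaussianReal 0 v) := by
  by_cases hv : v = 0
  · subst hv
    rw [gaussianReal_zero_var]
    exact aux_integrable_dirac 0 (Continuous.stronglyMeasurable (by continuity))
  · have hvpos : (0:ℝ) < v := lt_of_le_of_ne v.coe_nonneg (by exact_mod_cast (Ne.symm hv))
    have hpos : 0 < 1 / (2 * (v:ℝ)) - η' := by
      rw [sub_pos, lt_div_iff₀ (by positivity)]
      linarith [hcond]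
    have hmeas : AEMeasurable (fun x : ℝ => (gaussianPDFReal 0 v x).toNNReal) volume :=
      (measurable_gaussianPDFReal 0 v).real_toNNReal.aemeasurable
    rw [gaussianReal_of_var_ne_zero 0 hv, gaussianPDF_def]
    simp only [ENNReal.ofReal]
    rw [integrable_withDensity_iff_integrable_smul₀ hmeas]
    refine ((integrable_exp_neg_mul_sq hpos).const_mul ((√(2 * π * v))⁻¹)).congr
      (ae_of_all _ fun x => ?_)
    simp only []
    rw [NNReal.smul_def, Real.coe_toNNReal _ (gaussianPDFReal_nonneg 0 v x), smul_eq_mul,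
      gaussianPDFReal]
    have hE : -(1 / (2 * (v:ℝ)) - η') * x ^ 2 = -(x - 0) ^ 2 / (2 * (v:ℝ)) + η' * x ^ 2 := by
      field_simp
      ring
    rw [hE, Real.exp_add]
    ring

/-- Real form of the mixed identity, with integrability. -/
lemma mixed_real {Ω : Type*} [MeasurableSpace Ω] (P : Measure Ω) [IsProbabilityMeasure P]
    {A B : Ω → ℝ} (hA : Measurable A) (hB : Measurable B) {vA vB cAB : ℝ}
    (hq : ∀ u : ℝ, 0 ≤ u ^ 2 * vA + 2 * u * cAB + vB)
    (hmapA : Measure.map A P = gaussianReal 0 vA.toNNReal)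
    (hmapuB : ∀ u : ℝ, Measure.map (fun ω => u * A ω + B ω) P
      = gaussianReal 0 (u ^ 2 * vA + 2 * u * cAB + vB).toNNReal)
    (s : ℝ) :
    ∫ ω, rexp (s * A ω) * Real.cos (B ω) ∂P
      = rexp (s ^ 2 * vA / 2 - vB / 2) * Real.cos (s * cAB) := by
  have hintA : Integrable (fun ω => rexp (s * A ω)) P := by
    have h0 : Integrable (fun x => rexp (s * x)) (Measure.map A P) := by
      rw [hmapA]; exact gauss_exp_int _ s
    exact (integrable_map_measure h0.aestronglyMeasurable hA.aemeasurable).mp h0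
  have hFmeas : AEStronglyMeasurable
      (fun ω => Complex.exp (s * A ω + Complex.I * B ω)) P := by
    refine (Measurable.cexp ?_).stronglyMeasurable.aestronglyMeasurable
    exact ((Complex.measurable_ofReal.comp hA).const_mul (s:ℂ)).add
      ((Complex.measurable_ofReal.comp hB).const_mul Complex.I)
  have hgint : Integrable (fun ω => Complex.exp (s * A ω + Complex.I * B ω)) P := by
    refine Integrable.mono' hintA hFmeas (ae_of_all _ fun ω => ?_)
    rw [Complex.norm_exp]
    simp [Complex.add_re, Complex.mul_re]
  have hre : ∀ ω, Complex.reCLM (Complex.exp (s * A ω + Complex.I * B ω))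
      = rexp (s * A ω) * Real.cos (B ω) := by
    intro ω
    simp only [Complex.reCLM_apply, Complex.exp_re]
    congr 1
    · congr 1
      simp [Complex.add_re, Complex.mul_re]
    · congr 1
      simp [Complex.add_im, Complex.mul_im]
  calc ∫ ω, rexp (s * A ω) * Real.cos (B ω) ∂P
      = ∫ ω, Complex.reCLM (Complex.exp (s * A ω + Complex.I * B ω)) ∂P :=
        integral_congr_ae (ae_of_all _ fun ω => (hre ω).symm)
    _ = Complex.reCLM (∫ ω, Complex.exp (s * A ω + Complex.I * B ω) ∂P) :=
        ContinuousLinearMap.integral_comp_comm _ hgint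
    _ = rexp (s ^ 2 * vA / 2 - vB / 2) * Real.cos (s * cAB) := by
        rw [mixed_identity P hA hB hq hmapA hmapuB s]
        have hexp : ((s:ℂ)) ^ 2 * vA / 2 + s * cAB * Complex.I - vB / 2
            = ((s ^ 2 * vA / 2 - vB / 2 : ℝ) : ℂ) + ((s * cAB : ℝ) : ℂ) * Complex.I := by
          push_cast; ring
        rw [hexp]
        simp only [Complex.reCLM_apply, Complex.exp_re, Complex.add_re, Complex.ofReal_re,
          Complex.add_im, Complex.ofReal_im, Complex.mul_re, Complex.mul_im,
          Complex.I_re, Complex.I_im]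
        norm_num

lemma main_meas
    {Ω : Type*} [MeasurableSpace Ω] (P : Measure Ω) [IsProbabilityMeasure P]
    (A B : Ω → ℝ) (hA : Measurable A) (hB : Measurable B)
    (vA vB cAB : ℝ) (hvA : 0 < vA)
    (hGauss : ∀ s t : ℝ, Measure.map (fun ω => s * A ω + t * B ω) P =
      gaussianReal 0 (s ^ 2 * vA + 2 * s * t * cAB + t ^ 2 * vB).toNNReal)
    (η : ℝ) (hη0 : 0 ≤ η) (hη : η < 1 / (2 * vA)) :
    ∫ ω, Real.exp (η * A ω ^ 2) * Real.cos (B ω) ∂P ≤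
      (∫ ω, Real.exp (η * A ω ^ 2) ∂P) * ∫ ω, Real.cos (B ω) ∂P := by
  have hvA' : (vA.toNNReal : ℝ) = vA := Real.coe_toNNReal _ hvA.le
  -- marginal laws
  have hmapA : Measure.map A P = gaussianReal 0 vA.toNNReal := by
    have h := hGauss 1 0
    have hfun : (fun ω => (1:ℝ) * A ω + 0 * B ω) = A := funext fun ω => by ring
    have hexpr : (1:ℝ) ^ 2 * vA + 2 * 1 * 0 * cAB + 0 ^ 2 * vB = vA := by ring
    rwa [hfun, hexpr] at h
  have hmapB : Measure.map B P = gaussianReal 0 vB.toNNReal := by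
    have h := hGauss 0 1
    have hfun : (fun ω => (0:ℝ) * A ω + 1 * B ω) = B := funext fun ω => by ring
    have hexpr : (0:ℝ) ^ 2 * vA + 2 * 0 * 1 * cAB + 1 ^ 2 * vB = vB := by ring
    rwa [hfun, hexpr] at h
  have hmapuB : ∀ u : ℝ, Measure.map (fun ω => u * A ω + B ω) P
      = gaussianReal 0 (u ^ 2 * vA + 2 * u * cAB + vB).toNNReal := by
    intro u
    have h := hGauss u 1
    have hfun : (fun ω => u * A ω + 1 * B ω) = fun ω => u * A ω + B ω :=
      funext fun ω => by ring
    have hexpr : u ^ 2 * vA + 2 * u * 1 * cAB + 1 ^ 2 * vB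
        = u ^ 2 * vA + 2 * u * cAB + vB := by ring
    rwa [hfun, hexpr] at h
  -- nonnegativity of the quadratic form
  have hq : ∀ u : ℝ, 0 ≤ u ^ 2 * vA + 2 * u * cAB + vB := by
    intro u
    by_contra hcon
    push_neg at hcon
    -- the law of u•A + B is degenerate
    have hmeasf : Measurable fun ω => u * A ω + B ω := (hA.const_mul u).add hB
    have hdirac : Measure.map (fun ω => u * A ω + B ω) P = Measure.dirac 0 := by
      rw [hmapuB u, Real.toNNReal_of_nonpos hcon.le, gaussianReal_zero_var]
    have hae : ∀ᵐ ω ∂P, u * A ω + B ω = 0 := by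
      rw [ae_iff]
      have h0 : P ((fun ω => u * A ω + B ω) ⁻¹' ({0}ᶜ)) = 0 := by
        rw [← Measure.map_apply hmeasf (measurableSet_singleton (0:ℝ)).compl, hdirac,
          Measure.dirac_apply' _ (measurableSet_singleton (0:ℝ)).compl]
        simp
      exact h0
    -- pick u1 ≠ u with still-negative quadratic
    have hcont : ContinuousAt (fun w : ℝ => w ^ 2 * vA + 2 * w * cAB + vB) u :=
      Continuous.continuousAt (by continuity)
    have hev : ∀ᶠ w in nhdsWithin u ({u}ᶜ),
        (fun w : ℝ => w ^ 2 * vA + 2 * w * cAB + vB) w < 0 :=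
      (hcont.eventually_lt continuousAt_const hcon).filter_mono nhdsWithin_le_nhds
    obtain ⟨u1, hq1, hu1mem⟩ := (hev.and eventually_mem_nhdsWithin).exists
    have hu1ne : u1 ≠ u := hu1mem
    -- two expressions for the law of u1•A + B
    have key : Measure.map (fun ω => u1 * A ω + B ω) P
        = Measure.map (fun ω => (u1 - u) * A ω + 0 * B ω) P := by
      refine Measure.map_congr (hae.mono fun ω hω => ?_)
      simp only []
      linear_combination hω
    have hfinal := (hmapuB u1).symm.trans (key.trans (hGauss (u1 - u) 0))
    have hvar2 : (u1 - u) ^ 2 * vA + 2 * (u1 - u) * 0 * cAB + 0 ^ 2 * vB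
        = (u1 - u) ^ 2 * vA := by ring
    rw [hvar2] at hfinal
    have hltz : (u1 ^ 2 * vA + 2 * u1 * cAB + vB).toNNReal = 0 :=
      Real.toNNReal_of_nonpos hq1.le
    have hposvar : (0:ℝ) < (u1 - u) ^ 2 * vA := by
      have : u1 - u ≠ 0 := sub_ne_zero.mpr hu1ne
      positivity
    have hne0 : ((u1 - u) ^ 2 * vA).toNNReal ≠ 0 := by
      simp only [ne_eq, Real.toNNReal_eq_zero, not_le]
      exact hposvar
    have heval := congrArg (fun m : Measure ℝ => m {0}) hfinal
    simp only [hltz, gaussianReal_zero_var] at heval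
    rw [Measure.dirac_apply' _ (measurableSet_singleton (0:ℝ))] at heval
    have hzero : gaussianReal 0 ((u1 - u) ^ 2 * vA).toNNReal {0} = 0 :=
      gaussianReal_absolutelyContinuous 0 hne0 Real.volume_singleton
    rw [hzero] at heval
    simp at heval
  have hvB0 : 0 ≤ vB := by have := hq 0; simpa using this
  have hvB' : (vB.toNNReal : ℝ) = vB := Real.coe_toNNReal _ hvB0
  -- integrability of exp (η A²)
  have hIexpA : Integrable (fun ω => rexp (η * A ω ^ 2)) P := by
    have hcond : 2 * (vA.toNNReal : ℝ) * η < 1 := by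
      rw [hvA']
      rw [lt_div_iff₀ (by positivity)] at hη
      linarith
    have h0 : Integrable (fun x => rexp (η * x ^ 2)) (Measure.map A P) := by
      rw [hmapA]; exact gauss_expsq_int _ η hcond
    exact (integrable_map_measure h0.aestronglyMeasurable hA.aemeasurable).mp h0
  -- the auxiliary Gaussian measure
  set μ : Measure ℝ := gaussianReal 0 (2 * η).toNNReal with hμ
  have : IsProbabilityMeasure μ := by rw [hμ]; infer_instance
  have h2η : ((2 * η).toNNReal : ℝ) = 2 * η := Real.coe_toNNReal _ (by linarith)
  have hkey : ∀ a : ℝ, ∫ s, rexp (s * a) ∂μ = rexp (η * a ^ 2) := by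
    intro a
    have h1 : ∫ s, rexp (s * a) ∂μ = ∫ s, rexp (a * s) ∂μ :=
      integral_congr_ae (ae_of_all _ fun s => by show rexp (s * a) = rexp (a * s); rw [mul_comm])
    rw [h1, hμ, gauss_exp]
    congr 1
    rw [h2η]
    ring
  -- mgf of A under P
  have hmgfP : ∀ s : ℝ, ∫ ω, rexp (s * A ω) ∂P = rexp (s ^ 2 * vA / 2) := by
    intro s
    have hsm : AEStronglyMeasurable (fun x : ℝ => rexp (s * x)) (Measure.map A P) :=
      Continuous.aestronglyMeasurable (by continuity)
    rw [← integral_map hA.aemeasurable hsm, hmapA, gauss_exp, hvA']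
  -- cos moment of B under P
  have hcosB : ∫ ω, Real.cos (B ω) ∂P = rexp (-vB / 2) := by
    have hsm : AEStronglyMeasurable (fun x : ℝ => Real.cos x) (Measure.map B P) :=
      Continuous.aestronglyMeasurable (by continuity)
    rw [← integral_map hB.aemeasurable hsm, hmapB, gauss_cos, hvB']
  -- Fubini setup
  have hsm1 : AEStronglyMeasurable
      (Function.uncurry fun (ω : Ω) (s : ℝ) => rexp (s * A ω) * Real.cos (B ω)) (P.prod μ) := by
    have : Measurable fun p : Ω × ℝ => rexp (p.2 * A p.1) * Real.cos (B p.1) :=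
      ((measurable_snd.mul (hA.comp measurable_fst)).exp).mul ((hB.comp measurable_fst).cos)
    exact this.stronglyMeasurable.aestronglyMeasurable
  have hsm2 : AEStronglyMeasurable
      (Function.uncurry fun (ω : Ω) (s : ℝ) => rexp (s * A ω)) (P.prod μ) := by
    have : Measurable fun p : Ω × ℝ => rexp (p.2 * A p.1) :=
      (measurable_snd.mul (hA.comp measurable_fst)).exp
    exact this.stronglyMeasurable.aestronglyMeasurable
  have hslice : ∀ ω : Ω, Integrable (fun s => rexp (s * A ω)) μ := by
    intro ω
    exact (gauss_exp_int _ (A ω)).congr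
      (ae_of_all _ fun s => by show rexp (A ω * s) = rexp (s * A ω); rw [mul_comm])
  have hnormint1 : Integrable
      (fun ω => ∫ s, ‖rexp (s * A ω) * Real.cos (B ω)‖ ∂μ) P := by
    have heqf : (fun ω => ∫ s, ‖rexp (s * A ω) * Real.cos (B ω)‖ ∂μ)
        = fun ω => rexp (η * A ω ^ 2) * |Real.cos (B ω)| := by
      funext ω
      have : ∀ s : ℝ, ‖rexp (s * A ω) * Real.cos (B ω)‖
          = rexp (s * A ω) * |Real.cos (B ω)| := by
        intro s
        rw [norm_mul, Real.norm_eq_abs, Real.norm_eq_abs,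
          abs_of_pos (Real.exp_pos _)]
      simp_rw [this]
      rw [integral_mul_const, hkey]
    rw [heqf]
    refine hIexpA.mono' ?_ (ae_of_all _ fun ω => ?_)
    · exact (((hA.pow_const 2).const_mul η).exp.mul (hB.cos.abs)).stronglyMeasurable.aestronglyMeasurable
    · rw [Real.norm_eq_abs, abs_mul, abs_of_pos (Real.exp_pos _), _root_.abs_abs]
      calc rexp (η * A ω ^ 2) * |Real.cos (B ω)| ≤ rexp (η * A ω ^ 2) * 1 :=
            mul_le_mul_of_nonneg_left (Real.abs_cos_le_one _) (Real.exp_nonneg _)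
        _ = rexp (η * A ω ^ 2) := mul_one _
  have hFint1 : Integrable
      (Function.uncurry fun (ω : Ω) (s : ℝ) => rexp (s * A ω) * Real.cos (B ω)) (P.prod μ) := by
    refine (integrable_prod_iff hsm1).mpr ⟨ae_of_all _ fun ω => ?_, hnormint1⟩
    show Integrable (fun s => rexp (s * A ω) * Real.cos (B ω)) μ
    exact (hslice ω).mul_const _
  have hnormint2 : Integrable (fun ω => ∫ s, ‖rexp (s * A ω)‖ ∂μ) P := by
    have heqf : (fun ω => ∫ s, ‖rexp (s * A ω)‖ ∂μ) = fun ω => rexp (η * A ω ^ 2) := by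
      funext ω
      simp_rw [Real.norm_eq_abs, abs_of_pos (Real.exp_pos _)]
      rw [hkey]
    rw [heqf]
    exact hIexpA
  have hFint2 : Integrable
      (Function.uncurry fun (ω : Ω) (s : ℝ) => rexp (s * A ω)) (P.prod μ) := by
    refine (integrable_prod_iff hsm2).mpr ⟨ae_of_all _ fun ω => ?_, hnormint2⟩
    show Integrable (fun s => rexp (s * A ω)) μ
    exact hslice ω
  -- rewrite LHS
  have hLHS : ∫ ω, rexp (η * A ω ^ 2) * Real.cos (B ω) ∂P
      = ∫ s, rexp (s ^ 2 * vA / 2 - vB / 2) * Real.cos (s * cAB) ∂μ := by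
    have step1 : ∫ ω, rexp (η * A ω ^ 2) * Real.cos (B ω) ∂P
        = ∫ ω, ∫ s, rexp (s * A ω) * Real.cos (B ω) ∂μ ∂P := by
      refine integral_congr_ae (ae_of_all _ fun ω => ?_)
      show rexp (η * A ω ^ 2) * Real.cos (B ω) = ∫ s, rexp (s * A ω) * Real.cos (B ω) ∂μ
      rw [integral_mul_const, hkey]
    rw [step1, integral_integral_swap hFint1]
    exact integral_congr_ae (ae_of_all _ fun s =>
      mixed_real P hA hB hq hmapA hmapuB s)
  -- rewrite the exponential factor of RHS
  have hRHS1 : ∫ ω, rexp (η * A ω ^ 2) ∂P = ∫ s, rexp (s ^ 2 * vA / 2) ∂μ := by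
    have step1 : ∫ ω, rexp (η * A ω ^ 2) ∂P = ∫ ω, ∫ s, rexp (s * A ω) ∂μ ∂P := by
      refine integral_congr_ae (ae_of_all _ fun ω => ?_)
      show rexp (η * A ω ^ 2) = ∫ s, rexp (s * A ω) ∂μ
      rw [hkey]
    rw [step1, integral_integral_swap hFint2]
    exact integral_congr_ae (ae_of_all _ fun s => hmgfP s)
  rw [hLHS, hRHS1, hcosB]
  -- final inequality
  have hcond2 : 2 * (((2 * η).toNNReal : ℝ)) * (vA / 2) < 1 := by
    rw [h2η]
    rw [lt_div_iff₀ (by positivity)] at hη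
    nlinarith
  have hid : Integrable (fun s : ℝ => rexp (s ^ 2 * vA / 2)) μ := by
    refine (gauss_expsq_int _ (vA / 2) hcond2).congr (ae_of_all _ fun s => ?_)
    show rexp (vA / 2 * s ^ 2) = rexp (s ^ 2 * vA / 2)
    congr 1
    ring
  have hint2 : Integrable (fun s : ℝ => rexp (s ^ 2 * vA / 2) * rexp (-vB / 2)) μ :=
    hid.mul_const _
  have hint1 : Integrable (fun s : ℝ => rexp (s ^ 2 * vA / 2 - vB / 2) * Real.cos (s * cAB)) μ := by
    refine hint2.mono' ?_ (ae_of_all _ fun s => ?_)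
    · exact (((measurable_id.pow_const 2).mul_const _).div_const _ |>.sub_const _
        |>.exp.mul ((measurable_id.mul_const _).cos)).stronglyMeasurable.aestronglyMeasurable
    · show ‖rexp (s ^ 2 * vA / 2 - vB / 2) * Real.cos (s * cAB)‖
          ≤ rexp (s ^ 2 * vA / 2) * rexp (-vB / 2)
      have h1 : rexp (s ^ 2 * vA / 2 - vB / 2) = rexp (s ^ 2 * vA / 2) * rexp (-vB / 2) := by
        rw [← Real.exp_add]
        congr 1
        ring
      rw [Real.norm_eq_abs, abs_mul, abs_of_pos (Real.exp_pos _), h1]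
      calc rexp (s ^ 2 * vA / 2) * rexp (-vB / 2) * |Real.cos (s * cAB)|
          ≤ rexp (s ^ 2 * vA / 2) * rexp (-vB / 2) * 1 :=
            mul_le_mul_of_nonneg_left (Real.abs_cos_le_one _) (by positivity)
        _ = rexp (s ^ 2 * vA / 2) * rexp (-vB / 2) := mul_one _
  calc ∫ s, rexp (s ^ 2 * vA / 2 - vB / 2) * Real.cos (s * cAB) ∂μ
      ≤ ∫ s, rexp (s ^ 2 * vA / 2) * rexp (-vB / 2) ∂μ := by
        refine integral_mono hint1 hint2 fun s => ?_
        show rexp (s ^ 2 * vA / 2 - vB / 2) * Real.cos (s * cAB)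
            ≤ rexp (s ^ 2 * vA / 2) * rexp (-vB / 2)
        have h1 : rexp (s ^ 2 * vA / 2 - vB / 2) = rexp (s ^ 2 * vA / 2) * rexp (-vB / 2) := by
          rw [← Real.exp_add]
          congr 1
          ring
        rw [h1]
        have hc : Real.cos (s * cAB) ≤ 1 := Real.cos_le_one _
        calc rexp (s ^ 2 * vA / 2) * rexp (-vB / 2) * Real.cos (s * cAB)
            ≤ rexp (s ^ 2 * vA / 2) * rexp (-vB / 2) * 1 :=
              mul_le_mul_of_nonneg_left hc (by positivity)
          _ = rexp (s ^ 2 * vA / 2) * rexp (-vB / 2) := mul_one _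
    _ = (∫ s, rexp (s ^ 2 * vA / 2) ∂μ) * rexp (-vB / 2) := integral_mul_const _ _

theorem gaussian_exp_sq_cos_le
    {Ω : Type*} [MeasurableSpace Ω] (P : Measure Ω) [IsProbabilityMeasure P]
    (A B : Ω → ℝ) (vA vB cAB : ℝ) (hvA : 0 < vA)
    (hGauss : ∀ s t : ℝ, Measure.map (fun ω => s * A ω + t * B ω) P =
      gaussianReal 0 (s ^ 2 * vA + 2 * s * t * cAB + t ^ 2 * vB).toNNReal)
    (η : ℝ) (hη0 : 0 ≤ η) (hη : η < 1 / (2 * vA)) :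
    ∫ ω, Real.exp (η * A ω ^ 2) * Real.cos (B ω) ∂P ≤
      (∫ ω, Real.exp (η * A ω ^ 2) ∂P) * ∫ ω, Real.cos (B ω) ∂P := by
  -- A and B are almost everywhere measurable
  have hAae : AEMeasurable A P := by
    by_contra hcon
    have h1 := hGauss 1 0
    have hfun : (fun ω => (1:ℝ) * A ω + 0 * B ω) = A := funext fun ω => by ring
    rw [hfun] at h1
    have hcon' : ¬ AEMeasurable A P := hcon
    rw [Measure.map_of_not_aemeasurable hcon'] at h1
    have := congrArg (fun m : Measure ℝ => m Set.univ) h1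
    simp only [Measure.coe_zero, Pi.zero_apply] at this
    have h2 : (gaussianReal 0 ((1:ℝ) ^ 2 * vA + 2 * 1 * 0 * cAB + 0 ^ 2 * vB).toNNReal)
        Set.univ = 1 := measure_univ
    rw [h2] at this
    exact one_ne_zero this.symm
  have hBae : AEMeasurable B P := by
    by_contra hcon
    have h1 := hGauss 0 1
    have hfun : (fun ω => (0:ℝ) * A ω + 1 * B ω) = B := funext fun ω => by ring
    rw [hfun] at h1
    rw [Measure.map_of_not_aemeasurable hcon] at h1
    have := congrArg (fun m : Measure ℝ => m Set.univ) h1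
    simp only [Measure.coe_zero, Pi.zero_apply] at this
    have h2 : (gaussianReal 0 ((0:ℝ) ^ 2 * vA + 2 * 0 * 1 * cAB + 1 ^ 2 * vB).toNNReal)
        Set.univ = 1 := measure_univ
    rw [h2] at this
    exact one_ne_zero this.symm
  set A' := hAae.mk A with hA'def
  set B' := hBae.mk B with hB'def
  have hA' : Measurable A' := hAae.measurable_mk
  have hB' : Measurable B' := hBae.measurable_mk
  have haeA : A =ᵐ[P] A' := hAae.ae_eq_mk
  have haeB : B =ᵐ[P] B' := hBae.ae_eq_mk
  have hGauss' : ∀ s t : ℝ, Measure.map (fun ω => s * A' ω + t * B' ω) P =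
      gaussianReal 0 (s ^ 2 * vA + 2 * s * t * cAB + t ^ 2 * vB).toNNReal := by
    intro s t
    rw [← hGauss s t]
    refine Measure.map_congr ?_
    filter_upwards [haeA, haeB] with ω h1 h2
    rw [h1, h2]
  have hmain := main_meas P A' B' hA' hB' vA vB cAB hvA hGauss' η hη0 hη
  have hL : ∫ ω, Real.exp (η * A ω ^ 2) * Real.cos (B ω) ∂P
      = ∫ ω, Real.exp (η * A' ω ^ 2) * Real.cos (B' ω) ∂P := by
    refine integral_congr_ae ?_
    filter_upwards [haeA, haeB] with ω h1 h2
    rw [h1, h2]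
  have hR1 : ∫ ω, Real.exp (η * A ω ^ 2) ∂P = ∫ ω, Real.exp (η * A' ω ^ 2) ∂P := by
    refine integral_congr_ae ?_
    filter_upwards [haeA] with ω h1
    rw [h1]
  have hR2 : ∫ ω, Real.cos (B ω) ∂P = ∫ ω, Real.cos (B' ω) ∂P := by
    refine integral_congr_ae ?_
    filter_upwards [haeB] with ω h2
    rw [h2]
  rw [hL, hR1, hR2]
  exact hmain

end
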